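/- Let P be a stack polyomino. Then the set of all inner 2-minors of P forms a reduced quadratic Gröbner basis of I_P with respect to the lexicographic order induced by x_{(i,j)} > x_{(k,l)} iff i > k, or i = k and j > l. -/

import Mathlib

open scoped BigOperators

abbrev Cell : Type := ℕ × ℕ

/-- The four corners of the unit cell with lower left corner `a`. -/
def cellVerts (a : Cell) : Finset (ℕ × ℕ) :=
  {a, (a.1 + 1, a.2), (a.1, a.2 + 1), (a.1 + 1, a.2 + 1)}

/-- The vertex set of a collection of cells. -/
def verts (P : Finset Cell) : Finset (ℕ × ℕ) := P.biUnion cellVerts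

/-- Row convexity of a collection of cells. -/
def RowConvex (P : Finset Cell) : Prop :=
  ∀ a ∈ P, ∀ b ∈ P, a.2 = b.2 → ∀ r : ℕ, a.1 ≤ r → r ≤ b.1 → (r, a.2) ∈ P

/-- Column convexity of a collection of cells. -/
def ColConvex (P : Finset Cell) : Prop :=
  ∀ a ∈ P, ∀ b ∈ P, a.1 = b.1 → ∀ s : ℕ, a.2 ≤ s → s ≤ b.2 → (a.1, s) ∈ P

/-- A collection of cells is convex if it is row and column convex. -/
def IsConvexColl (P : Finset Cell) : Prop := RowConvex P ∧ ColConvex P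

/-- Weak connectedness: any two cells are joined by a sequence of cells of `P`
in which consecutive cells share at least one vertex. -/
def WeaklyConnected (P : Finset Cell) : Prop :=
  ∀ a ∈ P, ∀ b ∈ P,
    Relation.ReflTransGen
      (fun c d => c ∈ P ∧ d ∈ P ∧ (cellVerts c ∩ cellVerts d).Nonempty) a b

/-- Two cells share an edge. -/
def edgeAdj (a b : Cell) : Prop :=
  (a.1 = b.1 ∧ (a.2 + 1 = b.2 ∨ b.2 + 1 = a.2)) ∨
  (a.2 = b.2 ∧ (a.1 + 1 = b.1 ∨ b.1 + 1 = a.1))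

/-- Connectedness: any two cells are joined by an edge-sharing path of cells of `P`. -/
def ConnectedColl (P : Finset Cell) : Prop :=
  ∀ a ∈ P, ∀ b ∈ P,
    Relation.ReflTransGen (fun c d => c ∈ P ∧ d ∈ P ∧ edgeAdj c d) a b

/-- `Q` is a connected component of `P`. -/
def IsComponent (P Q : Finset Cell) : Prop :=
  Q ⊆ P ∧ Q.Nonempty ∧ ConnectedColl Q ∧
    ∀ R : Finset Cell, Q ⊆ R → R ⊆ P → ConnectedColl R → R = Q

/-- The cell `c` belongs to the interval `[a,b]`. -/
def cellInBox (a b : ℕ × ℕ) (c : Cell) : Prop :=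
  a.1 ≤ c.1 ∧ c.1 + 1 ≤ b.1 ∧ a.2 ≤ c.2 ∧ c.2 + 1 ≤ b.2

/-- `c` is a border cell of the interval `[a,b]`. -/
def borderCell (a b : ℕ × ℕ) (c : Cell) : Prop :=
  cellInBox a b c ∧ (c.1 = a.1 ∨ c.1 + 1 = b.1 ∨ c.2 = a.2 ∨ c.2 + 1 = b.2)

/-- A collection of cells is simple (has no holes). -/
def SimpleColl (P : Finset Cell) : Prop :=
  ∀ a b : ℕ × ℕ, a.1 < b.1 → a.2 < b.2 →
    (∀ v ∈ verts P, a.1 < v.1 ∧ v.1 < b.1 ∧ a.2 < v.2 ∧ v.2 < b.2) →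
    ∀ c : Cell, cellInBox a b c → c ∉ P →
      ∃ d : Cell, borderCell a b d ∧
        Relation.ReflTransGen
          (fun u v => cellInBox a b u ∧ cellInBox a b v ∧ u ∉ P ∧ v ∉ P ∧ edgeAdj u v) c d

/-- `[a,b]` is an inner interval of `P`: it is proper and all of its cells belong to `P`. -/
def InnerInterval (P : Finset Cell) (a b : ℕ × ℕ) : Prop :=
  a.1 < b.1 ∧ a.2 < b.2 ∧
    ∀ r s : ℕ, a.1 ≤ r → r < b.1 → a.2 ≤ s → s < b.2 → (r, s) ∈ P

/-- The set of inner 2-minors of `P`. -/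
def innerMinors (K : Type*) [Field K] (P : Finset Cell) :
    Set (MvPolynomial {v : ℕ × ℕ // v ∈ verts P} K) :=
  { f | ∃ a b c d : {v : ℕ × ℕ // v ∈ verts P},
      InnerInterval P a.1 b.1 ∧ c.1 = (b.1.1, a.1.2) ∧ d.1 = (a.1.1, b.1.2) ∧
      f = MvPolynomial.X a * MvPolynomial.X b - MvPolynomial.X c * MvPolynomial.X d }

/-- The ideal of inner 2-minors of `P`. -/
noncomputable def innerIdeal (K : Type*) [Field K] (P : Finset Cell) :
    Ideal (MvPolynomial {v : ℕ × ℕ // v ∈ verts P} K) :=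
  Ideal.span (innerMinors K P)

/-- The variable order for the lexicographic order `<¹_lex`:
`x_{(i,j)} > x_{(k,l)}` iff `i > k`, or `i = k` and `j > l`. -/
def varGt (a b : ℕ × ℕ) : Prop := b.1 < a.1 ∨ (a.1 = b.1 ∧ b.2 < a.2)

/-- The induced lexicographic order on monomials (exponent vectors): `m < m'` iff at the
greatest variable where they differ, `m` has the smaller exponent. -/
def monLt {P : Finset Cell} (m m' : {v : ℕ × ℕ // v ∈ verts P} →₀ ℕ) : Prop :=
  ∃ a : {v : ℕ × ℕ // v ∈ verts P},
    m a < m' a ∧ ∀ b : {v : ℕ × ℕ // v ∈ verts P}, varGt b.1 a.1 → m b = m' b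

/-- `m` is the leading monomial of `f` with respect to `<¹_lex`. -/
def IsLeadMon {K : Type*} [Field K] {P : Finset Cell}
    (f : MvPolynomial {v : ℕ × ℕ // v ∈ verts P} K)
    (m : {v : ℕ × ℕ // v ∈ verts P} →₀ ℕ) : Prop :=
  m ∈ f.support ∧ ∀ m' ∈ f.support, m' ≠ m → monLt m' m

/-- `G` is a Gröbner basis of the ideal `I` with respect to `<¹_lex`. -/
def IsGroebnerBasis {K : Type*} [Field K] {P : Finset Cell}
    (G : Set (MvPolynomial {v : ℕ × ℕ // v ∈ verts P} K))
    (I : Ideal (MvPolynomial {v : ℕ × ℕ // v ∈ verts P} K)) : Prop :=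
  (∀ g ∈ G, g ∈ I) ∧
  ∀ f ∈ I, f ≠ 0 → ∃ g ∈ G, ∃ mg mf, IsLeadMon g mg ∧ IsLeadMon f mf ∧
    ∃ d, mf = mg + d

/-- `G` is a reduced Gröbner basis of `I` with respect to `<¹_lex`: it is a Gröbner
basis, each element is monic, and no monomial occurring in an element of `G` is
divisible by the leading monomial of another element of `G`. -/
def IsReducedGroebnerBasis {K : Type*} [Field K] {P : Finset Cell}
    (G : Set (MvPolynomial {v : ℕ × ℕ // v ∈ verts P} K))
    (I : Ideal (MvPolynomial {v : ℕ × ℕ // v ∈ verts P} K)) : Prop :=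
  IsGroebnerBasis G I ∧
  (∀ g ∈ G, ∃ m, IsLeadMon g m ∧ g.coeff m = 1) ∧
  (∀ g ∈ G, ∀ g' ∈ G, g' ≠ g → ∀ m ∈ g.support, ∀ m',
      IsLeadMon g' m' → ¬ ∃ d, m = m' + d)

/-- `P` is a stack polyomino: a convex collection of cells which is a union of
vertical cell intervals whose bottom cells all lie in one row. -/
def StackPolyomino (P : Finset Cell) : Prop :=
  P.Nonempty ∧ IsConvexColl P ∧
    ∃ j₀ : ℕ, (∀ c ∈ P, j₀ ≤ c.2) ∧ ∀ c ∈ P, (c.1, j₀) ∈ P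
/-! ### Auxiliary development -/

namespace StackAux

open Finsupp

variable {P : Finset Cell}

abbrev T (P : Finset Cell) := {v : ℕ × ℕ // v ∈ verts P}

/-! #### The variable order -/

lemma varGt_trans {a b c : ℕ × ℕ} (h1 : varGt a b) (h2 : varGt b c) : varGt a c := by
  unfold varGt at *; omega

lemma varGt_irrefl (a : ℕ × ℕ) : ¬ varGt a a := by unfold varGt; omega

lemma varGt_trichot (a b : ℕ × ℕ) : varGt a b ∨ a = b ∨ varGt b a := by
  unfold varGt
  rcases a with ⟨a1, a2⟩; rcases b with ⟨b1, b2⟩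
  simp only [Prod.mk.injEq]
  omega

lemma varGt_subtype_trichot (a b : T P) : varGt a.1 b.1 ∨ a = b ∨ varGt b.1 a.1 := by
  rcases varGt_trichot a.1 b.1 with h | h | h
  · exact Or.inl h
  · exact Or.inr (Or.inl (Subtype.ext h))
  · exact Or.inr (Or.inr h)

/-! #### Basic properties of `monLt` -/

lemma monLt_irrefl (m : {v : ℕ × ℕ // v ∈ verts P} →₀ ℕ) : ¬ monLt m m := by
  rintro ⟨a, h1, -⟩; omega

lemma monLt_asymm {m m' : {v : ℕ × ℕ // v ∈ verts P} →₀ ℕ}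
    (h : monLt m m') (h' : monLt m' m) : False := by
  obtain ⟨a, ha1, ha2⟩ := h
  obtain ⟨a', hb1, hb2⟩ := h'
  rcases varGt_subtype_trichot a a' with hc | hc | hc
  · have := hb2 a hc; omega
  · subst hc; omega
  · have := ha2 a' hc; omega

lemma monLt_trans {m₁ m₂ m₃ : {v : ℕ × ℕ // v ∈ verts P} →₀ ℕ}
    (h : monLt m₁ m₂) (h' : monLt m₂ m₃) : monLt m₁ m₃ := by
  obtain ⟨a, ha1, ha2⟩ := h
  obtain ⟨b, hb1, hb2⟩ := h'
  rcases varGt_subtype_trichot a b with hc | hc | hc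
  · -- a is varGt-greater than b : use a
    refine ⟨a, ?_, fun v hv => ?_⟩
    · have := hb2 a hc; omega
    · have hvb : varGt v.1 b.1 := varGt_trans hv hc
      rw [ha2 v hv, hb2 v hvb]
  · subst hc
    exact ⟨a, by omega, fun v hv => by rw [ha2 v hv, hb2 v hv]⟩
  · -- b is varGt-greater than a : use b
    refine ⟨b, ?_, fun v hv => ?_⟩
    · have := ha2 b hc; omega
    · have hvb : varGt v.1 a.1 := varGt_trans hv hc
      rw [ha2 v hvb, hb2 v hv]

lemma monLt_total {m m' : {v : ℕ × ℕ // v ∈ verts P} →₀ ℕ} (h : m ≠ m') :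
    monLt m m' ∨ monLt m' m := by
  classical
  set D := (m.support ∪ m'.support).filter (fun v => m v ≠ m' v) with hD
  have hDne : D.Nonempty := by
    have : ∃ v, m v ≠ m' v := by
      by_contra hc; push_neg at hc
      exact h (Finsupp.ext hc)
    obtain ⟨v, hv⟩ := this
    refine ⟨v, Finset.mem_filter.mpr ⟨?_, hv⟩⟩
    rcases eq_or_ne (m v) 0 with h0 | h0
    · exact Finset.mem_union_right _ (Finsupp.mem_support_iff.mpr (by omega))
    · exact Finset.mem_union_left _ (Finsupp.mem_support_iff.mpr h0)
  obtain ⟨a, haD, hamax⟩ := D.exists_max_image (fun v => toLex v.1) hDne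
  have hkey : ∀ b : T P, varGt b.1 a.1 → m b = m' b := by
    intro b hb
    by_contra hc
    have hbD : b ∈ D := by
      refine Finset.mem_filter.mpr ⟨?_, hc⟩
      rcases eq_or_ne (m b) 0 with h0 | h0
      · exact Finset.mem_union_right _ (Finsupp.mem_support_iff.mpr (by omega))
      · exact Finset.mem_union_left _ (Finsupp.mem_support_iff.mpr h0)
    have hle := hamax b hbD
    have hlt : toLex a.1 < toLex b.1 := by
      rw [Prod.Lex.lt_iff]
      unfold varGt at hb
      tauto
    exact absurd hlt (not_lt.mpr hle)
  have hane : m a ≠ m' a := (Finset.mem_filter.mp haD).2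
  rcases Nat.lt_or_ge (m a) (m' a) with hlt | hge
  · exact Or.inl ⟨a, hlt, hkey⟩
  · exact Or.inr ⟨a, by omega, fun b hb => (hkey b hb).symm⟩

lemma monLt_wf : WellFounded (monLt (P := P)) := by
  classical
  have htri : IsTrichotomous (T P) (fun d j : T P => varGt d.1 j.1) :=
    ⟨fun a b h1 h2 => by
      rcases varGt_subtype_trichot a b with h | h | h
      exacts [absurd h h1, h, absurd h h2]⟩
  have hswap : WellFounded (Function.swap (fun d j : T P => varGt d.1 j.1)) := by
    haveI : IsTrans (T P) (Function.swap fun d j : T P => varGt d.1 j.1) :=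
      ⟨fun a b c h1 h2 => varGt_trans h2 h1⟩
    haveI : IsIrrefl (T P) (Function.swap fun d j : T P => varGt d.1 j.1) :=
      ⟨fun a => varGt_irrefl a.1⟩
    exact Finite.wellFounded_of_trans_of_irrefl _
  have hwf := Finsupp.Lex.wellFounded' (r := fun d j : T P => varGt d.1 j.1)
    (s := ((· < ·) : ℕ → ℕ → Prop)) (fun n h => Nat.not_lt_zero n h)
    (wellFounded_lt) hswap
  exact Subrelation.wf (fun {m m'} h => by
    obtain ⟨a, h1, h2⟩ := h; exact ⟨a, h2, h1⟩) hwf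

/-- A finite nonempty set of monomials has a `monLt`-greatest element. -/
lemma exists_monLt_max (s : Finset ({v : ℕ × ℕ // v ∈ verts P} →₀ ℕ)) (hs : s.Nonempty) :
    ∃ m ∈ s, ∀ m' ∈ s, m' ≠ m → monLt m' m := by
  classical
  induction s using Finset.induction_on with
  | empty => simp at hs
  | @insert x s hx ih =>
    rcases s.eq_empty_or_nonempty with rfl | hne
    · exact ⟨x, Finset.mem_insert_self _ _, by
        intro m' hm' hne'
        simp only [Finset.mem_insert, Finset.notMem_empty, or_false] at hm'
        exact absurd hm' hne'⟩
    · obtain ⟨m, hm, hmax⟩ := ih hne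
      have hxm : x ≠ m := fun hxm => hx (hxm ▸ hm)
      rcases monLt_total hxm with hlt | hlt
      · refine ⟨m, Finset.mem_insert_of_mem hm, ?_⟩
        intro m' hm' hne'
        rcases Finset.mem_insert.mp hm' with rfl | hm's
        · exact hlt
        · exact hmax m' hm's hne'
      · refine ⟨x, Finset.mem_insert_self _ _, ?_⟩
        intro m' hm' hne'
        rcases Finset.mem_insert.mp hm' with rfl | hm's
        · exact absurd rfl hne'
        · rcases eq_or_ne m' m with rfl | hm'm
          · exact hlt
          · exact monLt_trans (hmax m' hm's hm'm) hlt


/-! #### Geometry of stack polyominoes -/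

lemma mem_verts {v : ℕ × ℕ} : v ∈ verts P ↔ ∃ c ∈ P, v ∈ cellVerts c := Finset.mem_biUnion

lemma mem_cellVerts {v c : ℕ × ℕ} :
    v ∈ cellVerts c ↔ v = c ∨ v = (c.1 + 1, c.2) ∨ v = (c.1, c.2 + 1) ∨ v = (c.1 + 1, c.2 + 1) := by
  unfold cellVerts
  simp [Finset.mem_insert]

section Geometry

variable {j₀ : ℕ} (hrow : RowConvex P) (hcol : ColConvex P)
  (hb1 : ∀ c ∈ P, j₀ ≤ c.2) (hb2 : ∀ c ∈ P, (c.1, j₀) ∈ P)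

include hb1 in
lemma vert_ge {v : ℕ × ℕ} (hv : v ∈ verts P) : j₀ ≤ v.2 := by
  obtain ⟨c, hc, hvc⟩ := mem_verts.mp hv
  have hj := hb1 c hc
  rcases mem_cellVerts.mp hvc with h | h | h | h <;> subst h <;>
    first
      | omega
      | (dsimp only; omega)

include hcol hb2 in
lemma col_mem {x s s' : ℕ} (h : (x, s) ∈ P) (h1 : j₀ ≤ s') (h2 : s' ≤ s) : (x, s') ∈ P :=
  hcol (x, j₀) (hb2 _ h) (x, s) h rfl s' h1 h2

include hrow in
lemma row_mem {x x' r s : ℕ} (h : (x, s) ∈ P) (h' : (x', s) ∈ P) (h1 : x ≤ r) (h2 : r ≤ x') :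
    (r, s) ∈ P :=
  hrow (x, s) h (x', s) h' rfl r h1 h2

include hcol hb1 hb2 in
lemma below_vert {k y : ℕ} (h : (k, y) ∈ verts P) (hy : j₀ < y) :
    ∃ x, (x, y - 1) ∈ P ∧ (k = x ∨ k = x + 1) := by
  obtain ⟨c, hc, hvc⟩ := mem_verts.mp h
  have hcj := hb1 c hc
  have hc' : (c.1, c.2) ∈ P := by rwa [Prod.mk.eta]
  rcases mem_cellVerts.mp hvc with hh | hh | hh | hh
  · have h1 : k = c.1 := congrArg Prod.fst hh
    have h2 : y = c.2 := congrArg Prod.snd hh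
    exact ⟨c.1, col_mem hcol hb2 hc' (by omega) (by omega), Or.inl h1⟩
  · have h1 : k = c.1 + 1 := congrArg Prod.fst hh
    have h2 : y = c.2 := congrArg Prod.snd hh
    exact ⟨c.1, col_mem hcol hb2 hc' (by omega) (by omega), Or.inr h1⟩
  · have h1 : k = c.1 := congrArg Prod.fst hh
    have h2 : y = c.2 + 1 := congrArg Prod.snd hh
    refine ⟨c.1, ?_, Or.inl h1⟩
    have : y - 1 = c.2 := by omega
    rw [this]; exact hc'
  · have h1 : k = c.1 + 1 := congrArg Prod.fst hh
    have h2 : y = c.2 + 1 := congrArg Prod.snd hh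
    refine ⟨c.1, ?_, Or.inr h1⟩
    have : y - 1 = c.2 := by omega
    rw [this]; exact hc'

include hrow hcol hb1 hb2 in
lemma pair_row {a₁ b₁ y : ℕ} (ha : (a₁, y) ∈ verts P) (hb : (b₁, y) ∈ verts P)
    (hab : a₁ < b₁) (hy : j₀ < y) : (a₁, y - 1) ∈ P ∧ (b₁ - 1, y - 1) ∈ P := by
  obtain ⟨xa, hxa, hka⟩ := below_vert hcol hb1 hb2 ha hy
  obtain ⟨xb, hxb, hkb⟩ := below_vert hcol hb1 hb2 hb hy
  exact ⟨row_mem hrow hxa hxb (by omega) (by omega),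
    row_mem hrow hxa hxb (by omega) (by omega)⟩

include hrow hcol hb1 hb2 in
lemma mk_inner {v w : ℕ × ℕ} (hv : v ∈ verts P) (h1 : v.1 < w.1) (h2 : v.2 < w.2)
    (hc1 : (v.1, w.2 - 1) ∈ P) (hc2 : (w.1 - 1, w.2 - 1) ∈ P) : InnerInterval P v w := by
  refine ⟨h1, h2, fun r s hr1 hr2 hs1 hs2 => ?_⟩
  have hrP : (r, w.2 - 1) ∈ P := row_mem hrow hc1 hc2 hr1 (by omega)
  have hj : j₀ ≤ v.2 := vert_ge hb1 hv
  exact col_mem hcol hb2 hrP (by omega) (by omega)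

end Geometry

lemma inner_vert_a {a b : ℕ × ℕ} (h : InnerInterval P a b) : a ∈ verts P := by
  obtain ⟨h1, h2, h3⟩ := h
  exact mem_verts.mpr ⟨(a.1, a.2), h3 a.1 a.2 le_rfl h1 le_rfl h2,
    mem_cellVerts.mpr (Or.inl Prod.mk.eta.symm)⟩

lemma inner_vert_b {a b : ℕ × ℕ} (h : InnerInterval P a b) : b ∈ verts P := by
  obtain ⟨h1, h2, h3⟩ := h
  refine mem_verts.mpr ⟨(b.1 - 1, b.2 - 1), h3 (b.1 - 1) (b.2 - 1) (by omega) (by omega)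
    (by omega) (by omega), mem_cellVerts.mpr (Or.inr (Or.inr (Or.inr ?_)))⟩
  have e1 : b.1 - 1 + 1 = b.1 := by omega
  have e2 : b.2 - 1 + 1 = b.2 := by omega
  rw [e1, e2]

lemma inner_vert_c {a b : ℕ × ℕ} (h : InnerInterval P a b) : (b.1, a.2) ∈ verts P := by
  obtain ⟨h1, h2, h3⟩ := h
  refine mem_verts.mpr ⟨(b.1 - 1, a.2), h3 (b.1 - 1) a.2 (by omega) (by omega)
    le_rfl h2, mem_cellVerts.mpr (Or.inr (Or.inl ?_))⟩
  have e1 : b.1 - 1 + 1 = b.1 := by omega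
  rw [e1]

lemma inner_vert_d {a b : ℕ × ℕ} (h : InnerInterval P a b) : (a.1, b.2) ∈ verts P := by
  obtain ⟨h1, h2, h3⟩ := h
  refine mem_verts.mpr ⟨(a.1, b.2 - 1), h3 a.1 (b.2 - 1) le_rfl h1 (by omega) (by omega),
    mem_cellVerts.mpr (Or.inr (Or.inr (Or.inl ?_)))⟩
  have e2 : b.2 - 1 + 1 = b.2 := by omega
  rw [e2]

/-! #### Row and column counts of monomials -/

def rowC (m : {v : ℕ × ℕ // v ∈ verts P} →₀ ℕ) (i : ℕ) : ℕ :=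
  m.sum fun v e => if v.1.1 = i then e else 0

def colC (m : {v : ℕ × ℕ // v ∈ verts P} →₀ ℕ) (j : ℕ) : ℕ :=
  m.sum fun v e => if v.1.2 = j then e else 0

def wt (m : {v : ℕ × ℕ // v ∈ verts P} →₀ ℕ) : ℕ := m.sum fun _ e => e

lemma rowC_add (m n : T P →₀ ℕ) (i : ℕ) : rowC (m + n) i = rowC m i + rowC n i :=
  Finsupp.sum_add_index' (fun a => by simp) (fun a b₁ b₂ => by split <;> simp)

lemma colC_add (m n : T P →₀ ℕ) (j : ℕ) : colC (m + n) j = colC m j + colC n j :=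
  Finsupp.sum_add_index' (fun a => by simp) (fun a b₁ b₂ => by split <;> simp)

lemma wt_add (m n : T P →₀ ℕ) : wt (m + n) = wt m + wt n :=
  Finsupp.sum_add_index' (fun a => rfl) (fun a b₁ b₂ => rfl)

lemma rowC_single (v : T P) (e : ℕ) (i : ℕ) :
    rowC (Finsupp.single v e) i = if v.1.1 = i then e else 0 :=
  Finsupp.sum_single_index (by simp)

lemma colC_single (v : T P) (e : ℕ) (j : ℕ) :
    colC (Finsupp.single v e) j = if v.1.2 = j then e else 0 :=
  Finsupp.sum_single_index (by simp)

lemma wt_single (v : T P) (e : ℕ) : wt (Finsupp.single v e) = e :=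
  Finsupp.sum_single_index rfl

lemma le_rowC (m : T P →₀ ℕ) (v : T P) : m v ≤ rowC m v.1.1 := by
  classical
  rcases eq_or_ne (m v) 0 with h | h
  · omega
  · have hv : v ∈ m.support := Finsupp.mem_support_iff.mpr h
    have h2 := Finset.single_le_sum (f := fun u : T P => if u.1.1 = v.1.1 then m u else 0)
      (fun u _ => Nat.zero_le _) hv
    simpa [rowC, Finsupp.sum] using h2

lemma le_colC (m : T P →₀ ℕ) (v : T P) : m v ≤ colC m v.1.2 := by
  classical
  rcases eq_or_ne (m v) 0 with h | h
  · omega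
  · have hv : v ∈ m.support := Finsupp.mem_support_iff.mpr h
    have h2 := Finset.single_le_sum (f := fun u : T P => if u.1.2 = v.1.2 then m u else 0)
      (fun u _ => Nat.zero_le _) hv
    simpa [colC, Finsupp.sum] using h2

lemma le_wt (m : T P →₀ ℕ) (v : T P) : m v ≤ wt m := by
  classical
  rcases eq_or_ne (m v) 0 with h | h
  · omega
  · have hv : v ∈ m.support := Finsupp.mem_support_iff.mpr h
    exact Finset.single_le_sum (f := fun u : T P => m u) (fun u _ => Nat.zero_le _) hv

lemma colC_eq_sum (m : T P →₀ ℕ) {s : Finset (T P)} (hs : m.support ⊆ s) (y : ℕ) :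
    colC m y = ∑ v ∈ s.filter (fun v => v.1.2 = y), m v := by
  classical
  rw [colC, Finsupp.sum, Finset.sum_filter]
  exact Finset.sum_subset hs (fun x _ hnx => by
    simp [Finsupp.notMem_support_iff.mp hnx])


/-! #### Standard monomials -/

def Std (m : {v : ℕ × ℕ // v ∈ verts P} →₀ ℕ) : Prop :=
  ¬ ∃ a b : T P, InnerInterval P a.1 b.1 ∧ 1 ≤ m a ∧ 1 ≤ m b

lemma Std.mono {m n : T P →₀ ℕ} (h : n ≤ m) (hm : Std m) : Std n := by
  rintro ⟨a, b, hI, ha, hb⟩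
  have h' := Finsupp.le_def.mp h
  exact hm ⟨a, b, hI, le_trans ha (h' a), le_trans hb (h' b)⟩

section Unique

variable {j₀ : ℕ} (hrow : RowConvex P) (hcol : ColConvex P)
  (hb1 : ∀ c ∈ P, j₀ ≤ c.2) (hb2 : ∀ c ∈ P, (c.1, j₀) ∈ P)

include hrow hcol hb1 hb2 in
lemma sub_contra {μ ν : T P →₀ ℕ} (hStd : Std ν)
    (hrowEq : ∀ i, rowC μ i = rowC ν i) {y : ℕ}
    (hymax : ∀ v ∈ ν.support, v.1.2 ≤ y)
    {a b : T P} (ha2 : a.1.2 = y) (hbb2 : b.1.2 = y) (hab : a.1.1 < b.1.1)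
    (hlt : ν a < μ a) (hbν : b ∈ ν.support) : False := by
  classical
  have hμa : μ a ≤ rowC μ a.1.1 := le_rowC μ a
  -- find a variable of ν in row a.1.1 with strictly smaller second coordinate
  have hexv : ∃ v' ∈ ν.support, v'.1.1 = a.1.1 ∧ v'.1.2 ≠ y := by
    by_contra hc
    push_neg at hc
    have hν : rowC ν a.1.1 = ν a := by
      rw [rowC, Finsupp.sum]
      rcases eq_or_ne (ν a) 0 with h0 | h0
      · rw [h0]
        refine Finset.sum_eq_zero fun v hv => ?_
        by_cases hfst : v.1.1 = a.1.1
        · have hsnd : v.1.2 = y := hc v hv hfst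
          have : v = a := Subtype.ext (Prod.ext (by omega) (by omega))
          subst this
          exact absurd (Finsupp.mem_support_iff.mp hv) (by omega)
        · simp [hfst]
      · rw [Finset.sum_eq_single a (fun v hv hne => ?_) (fun hna => ?_)]
        · simp
        · by_cases hfst : v.1.1 = a.1.1
          · have hsnd : v.1.2 = y := hc v hv hfst
            exact absurd (Subtype.ext (Prod.ext (by omega) (by omega))) hne
          · simp [hfst]
        · exact absurd (Finsupp.mem_support_iff.mpr h0) hna
    rw [hrowEq] at hμa
    omega
  obtain ⟨v', hv's, hv'fst, hv'ne⟩ := hexv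
  have hv'le : v'.1.2 ≤ y := hymax v' hv's
  have hv'lt : v'.1.2 < y := by omega
  have hjv : j₀ ≤ v'.1.2 := vert_ge hb1 v'.2
  have hjy : j₀ < y := by omega
  have hav : (a.1.1, y) ∈ verts P := by
    have : (a.1.1, y) = a.1 := by rw [← ha2]
    rw [this]; exact a.2
  have hbv : (b.1.1, y) ∈ verts P := by
    have : (b.1.1, y) = b.1 := by rw [← hbb2]
    rw [this]; exact b.2
  obtain ⟨hP1, hP2⟩ := pair_row hrow hcol hb1 hb2 hav hbv hab hjy
  have hinner : InnerInterval P v'.1 b.1 := by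
    refine mk_inner hrow hcol hb1 hb2 v'.2 (by omega) (by omega) ?_ ?_
    · have h1 : (v'.1.1, b.1.2 - 1) = (a.1.1, y - 1) := by rw [hv'fst, hbb2]
      rw [h1]; exact hP1
    · have h2 : (b.1.1 - 1, b.1.2 - 1) = (b.1.1 - 1, y - 1) := by rw [hbb2]
      rw [h2]; exact hP2
  exact hStd ⟨v', b, hinner, Finsupp.mem_support_iff.mp hv's |> Nat.one_le_iff_ne_zero.mpr,
    Finsupp.mem_support_iff.mp hbν |> Nat.one_le_iff_ne_zero.mpr⟩

include hrow hcol hb1 hb2 in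
lemma std_unique : ∀ N (m m' : T P →₀ ℕ), wt m ≤ N → Std m → Std m' →
    (∀ i, rowC m i = rowC m' i) → (∀ j, colC m j = colC m' j) → m = m' := by
  classical
  have hzero : ∀ m m' : T P →₀ ℕ, m = 0 → (∀ j, colC m j = colC m' j) → m' = 0 := by
    intro m m' hm hc
    ext v
    have h1 := le_colC m' v
    have h2 : colC m v.1.2 = 0 := by
      rw [hm, colC, Finsupp.sum_zero_index]
    rw [← hc] at h1
    simp only [Finsupp.coe_zero, Pi.zero_apply]
    omega
  intro N
  induction N with
  | zero =>
    intro m m' hwt _ _ _ hcolEq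
    have hm : m = 0 := by
      ext v
      have := le_wt m v
      simp only [Finsupp.coe_zero, Pi.zero_apply]
      omega
    rw [hm, (hzero m m' hm hcolEq)]
  | succ N ih =>
    intro m m' hwt hStd hStd' hrowEq hcolEq
    by_cases hm0 : m = 0
    · rw [hm0, hzero m m' hm0 hcolEq]
    · have hsupp : m.support.Nonempty := Finsupp.support_nonempty_iff.mpr hm0
      obtain ⟨v₀, hv₀, hmax⟩ := m.support.exists_max_image (fun v => v.1.2) hsupp
      set y := v₀.1.2 with hy
      have hymax : ∀ v ∈ m.support, v.1.2 ≤ y := hmax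
      have hymax' : ∀ v ∈ m'.support, v.1.2 ≤ y := by
        intro v hv
        by_contra hgt
        push_neg at hgt
        have h1 : colC m v.1.2 = 0 := by
          rw [colC, Finsupp.sum]
          refine Finset.sum_eq_zero fun u hu => ?_
          have h2 := hymax u hu
          have h3 : ¬ u.1.2 = v.1.2 := by omega
          simp [h3]
        have h2 := le_colC m' v
        rw [← hcolEq] at h2
        have h3 := Finsupp.mem_support_iff.mp hv
        omega
      -- the multiplicities in the top row agree
      have claimA : ∀ v : T P, v.1.2 = y → m v = m' v := by
        intro v₁ hv₁y
        by_contra hne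
        set F := ((m.support ∪ m'.support).filter (fun v : T P => v.1.2 = y)) with hF
        have hFsum : ∑ v ∈ F, m v = ∑ v ∈ F, m' v := by
          rw [hF, ← colC_eq_sum m Finset.subset_union_left y,
            ← colC_eq_sum m' Finset.subset_union_right y]
          exact hcolEq y
        have hv₁F : v₁ ∈ F := by
          refine Finset.mem_filter.mpr ⟨?_, hv₁y⟩
          rcases eq_or_ne (m v₁) 0 with h0 | h0
          · exact Finset.mem_union_right _ (Finsupp.mem_support_iff.mpr (by omega))
          · exact Finset.mem_union_left _ (Finsupp.mem_support_iff.mpr h0)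
        have key : ∀ p r : T P, p ∈ F → r ∈ F → m' p < m p → m r < m' r → False := by
          intro p r hpF hrF hp hr
          have hp2 : p.1.2 = y := (Finset.mem_filter.mp hpF).2
          have hr2 : r.1.2 = y := (Finset.mem_filter.mp hrF).2
          have hpr : p ≠ r := fun h => by rw [h] at hp; omega
          have hpr1 : p.1.1 ≠ r.1.1 := fun h =>
            hpr (Subtype.ext (Prod.ext (by omega) (by omega)))
          rcases Nat.lt_or_ge p.1.1 r.1.1 with hlt | hge
          · exact sub_contra hrow hcol hb1 hb2 hStd' hrowEq hymax' hp2 hr2 hlt hp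
              (Finsupp.mem_support_iff.mpr (by omega))
          · have hlt : r.1.1 < p.1.1 := by omega
            exact sub_contra hrow hcol hb1 hb2 hStd (fun i => (hrowEq i).symm) hymax
              hr2 hp2 hlt hr (Finsupp.mem_support_iff.mpr (by omega))
        rcases Nat.lt_or_ge (m v₁) (m' v₁) with hlt | hge
        · have hexp : ∃ p ∈ F, m' p < m p := by
            by_contra hc
            push_neg at hc
            have := Finset.sum_lt_sum hc ⟨v₁, hv₁F, hlt⟩
            omega
          obtain ⟨p, hpF, hp⟩ := hexp
          exact key p v₁ hpF hv₁F hp hlt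
        · have hlt : m' v₁ < m v₁ := by omega
          have hexq : ∃ q ∈ F, m q < m' q := by
            by_contra hc
            push_neg at hc
            have := Finset.sum_lt_sum hc ⟨v₁, hv₁F, hlt⟩
            omega
          obtain ⟨q, hqF, hq⟩ := hexq
          exact key v₁ q hv₁F hqF hlt hq
      -- peel off the top row
      have hfeq : m.filter (fun v : T P => v.1.2 = y) = m'.filter (fun v : T P => v.1.2 = y) := by
        ext v
        rw [Finsupp.filter_apply, Finsupp.filter_apply]
        by_cases hvy : v.1.2 = y
        · simp only [hvy, if_pos]
          exact claimA v hvy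
        · simp [hvy]
      set e := m.filter (fun v : T P => v.1.2 = y) with he
      set m₀ := m.filter (fun v : T P => ¬ v.1.2 = y) with hm₀
      set m₀' := m'.filter (fun v : T P => ¬ v.1.2 = y) with hm₀'
      have hsm : e + m₀ = m := Finsupp.filter_pos_add_filter_neg m _
      have hsm' : e + m₀' = m' := by
        rw [hfeq]
        exact Finsupp.filter_pos_add_filter_neg m' _
      have hfle : ∀ (μ : T P →₀ ℕ) (p : T P → Prop) (_ : DecidablePred p), μ.filter p ≤ μ := by
        intro μ p hp
        rw [Finsupp.le_def]
        intro v
        rw [Finsupp.filter_apply]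
        split <;> omega
      have hrow₀ : ∀ i, rowC m₀ i = rowC m₀' i := by
        intro i
        have h1 : rowC m i = rowC e i + rowC m₀ i := by rw [← hsm, rowC_add]
        have h2 : rowC m' i = rowC e i + rowC m₀' i := by rw [← hsm', rowC_add]
        have := hrowEq i
        omega
      have hcol₀ : ∀ j, colC m₀ j = colC m₀' j := by
        intro j
        have h1 : colC m j = colC e j + colC m₀ j := by rw [← hsm, colC_add]
        have h2 : colC m' j = colC e j + colC m₀' j := by rw [← hsm', colC_add]
        have := hcolEq j
        omega
      have hStd₀ : Std m₀ := Std.mono (hfle m _ _) hStd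
      have hStd₀' : Std m₀' := Std.mono (hfle m' _ _) hStd'
      have hwt₀ : wt m₀ ≤ N := by
        have h1 : wt m = wt e + wt m₀ := by rw [← hsm, wt_add]
        have h2 : e v₀ = m v₀ := by
          rw [he, Finsupp.filter_apply, if_pos rfl]
        have h3 := le_wt e v₀
        have h4 := Finsupp.mem_support_iff.mp hv₀
        omega
      have := ih m₀ m₀' hwt₀ hStd₀ hStd₀' hrow₀ hcol₀
      rw [← hsm, ← hsm', this]

end Unique

/-! #### Reduction to standard monomials -/

lemma pair_le {m : T P →₀ ℕ} {a b : T P} (hne : a ≠ b) (ha : 1 ≤ m a) (hb : 1 ≤ m b) :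
    Finsupp.single a 1 + Finsupp.single b 1 ≤ m := by
  rw [Finsupp.le_def]
  intro v
  rw [Finsupp.add_apply, Finsupp.single_apply, Finsupp.single_apply]
  by_cases hva : a = v
  · subst hva
    rw [if_pos rfl, if_neg (fun h => hne h.symm)]
    omega
  · rw [if_neg hva]
    by_cases hvb : b = v
    · subst hvb; rw [if_pos rfl]; omega
    · rw [if_neg hvb]; omega

lemma not_corner {a b c d v : T P}
    (h1 : a.1.1 < b.1.1) (h2 : a.1.2 < b.1.2)
    (hc : c.1 = (b.1.1, a.1.2)) (hd : d.1 = (a.1.1, b.1.2))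
    (hv : varGt v.1 b.1) : v ≠ a ∧ v ≠ b ∧ v ≠ c ∧ v ≠ d := by
  have hc1 : c.1.1 = b.1.1 := by rw [hc]
  have hc2 : c.1.2 = a.1.2 := by rw [hc]
  have hd1 : d.1.1 = a.1.1 := by rw [hd]
  have hd2 : d.1.2 = b.1.2 := by rw [hd]
  unfold varGt at hv
  refine ⟨fun h => ?_, fun h => ?_, fun h => ?_, fun h => ?_⟩ <;>
    (subst h; omega)

section Reduce

variable {j₀ : ℕ} (hrow : RowConvex P) (hcol : ColConvex P)
  (hb1 : ∀ c ∈ P, j₀ ≤ c.2) (hb2 : ∀ c ∈ P, (c.1, j₀) ∈ P)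

include hrow hcol hb1 hb2 in
lemma reduce_exists : ∀ m : T P →₀ ℕ, ∃ n, Std n ∧ (∀ i, rowC n i = rowC m i) ∧
    (∀ j, colC n j = colC m j) ∧ (n = m ∨ monLt n m) := by
  classical
  intro m₁
  refine (monLt_wf (P := P)).induction
    (C := fun m => ∃ n, Std n ∧ (∀ i, rowC n i = rowC m i) ∧
      (∀ j, colC n j = colC m j) ∧ (n = m ∨ monLt n m)) m₁ ?_
  intro m ih
  by_cases hstd : Std m
  · exact ⟨m, hstd, fun _ => rfl, fun _ => rfl, Or.inl rfl⟩
  · obtain ⟨a, b, hI, hma, hmb⟩ := not_not.mp hstd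
    have h1 : a.1.1 < b.1.1 := hI.1
    have h2 : a.1.2 < b.1.2 := hI.2.1
    let c : T P := ⟨(b.1.1, a.1.2), inner_vert_c hI⟩
    let d : T P := ⟨(a.1.1, b.1.2), inner_vert_d hI⟩
    have hcc : c.1 = (b.1.1, a.1.2) := rfl
    have hdd : d.1 = (a.1.1, b.1.2) := rfl
    have hne_ab : a ≠ b := fun h => by rw [h] at h1; omega
    have hne_cb : c ≠ b := fun h => by
      have : c.1.2 = b.1.2 := by rw [h]
      rw [hcc] at this
      dsimp only at this
      omega
    have hne_db : d ≠ b := fun h => by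
      have : d.1.1 = b.1.1 := by rw [h]
      rw [hdd] at this
      dsimp only at this
      omega
    set ab := Finsupp.single a 1 + Finsupp.single b 1 with hab
    set cd := Finsupp.single c 1 + Finsupp.single d 1 with hcd
    have hle : ab ≤ m := pair_le hne_ab hma hmb
    set n₁ := m - ab + cd with hn₁
    have hcancel : m - ab + ab = m := tsub_add_cancel_of_le hle
    have hrowEq : ∀ i, rowC n₁ i = rowC m i := by
      intro i
      have hL : rowC n₁ i = rowC (m - ab) i + rowC cd i := by rw [hn₁, rowC_add]
      have hR : rowC m i = rowC (m - ab) i + rowC ab i := by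
        conv_lhs => rw [← hcancel]
        rw [rowC_add]
      have hcdab : rowC cd i = rowC ab i := by
        rw [hcd, hab, rowC_add, rowC_add, rowC_single, rowC_single, rowC_single, rowC_single]
        have e1 : c.1.1 = b.1.1 := by rw [hcc]
        have e2 : d.1.1 = a.1.1 := by rw [hdd]
        rw [e1, e2]
        omega
      omega
    have hcolEq : ∀ j, colC n₁ j = colC m j := by
      intro j
      have hL : colC n₁ j = colC (m - ab) j + colC cd j := by rw [hn₁, colC_add]
      have hR : colC m j = colC (m - ab) j + colC ab j := by
        conv_lhs => rw [← hcancel]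
        rw [colC_add]
      have hcdab : colC cd j = colC ab j := by
        have e1 : c.1.2 = a.1.2 := by rw [hcc]
        have e2 : d.1.2 = b.1.2 := by rw [hdd]
        rw [hcd, hab, colC_add, colC_add, colC_single, colC_single, colC_single, colC_single,
          e1, e2]
      omega
    have happly : ∀ v, n₁ v = m v - ab v + cd v := fun v => by
      rw [hn₁, Finsupp.add_apply, Finsupp.tsub_apply]
    have hmlt : monLt n₁ m := by
      refine ⟨b, ?_, ?_⟩
      · have e1 : ab b = 1 := by
          rw [hab, Finsupp.add_apply, Finsupp.single_apply, Finsupp.single_apply,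
            if_neg hne_ab, if_pos rfl]
        have e2 : cd b = 0 := by
          rw [hcd, Finsupp.add_apply, Finsupp.single_apply, Finsupp.single_apply,
            if_neg hne_cb, if_neg hne_db]
          omega
        rw [happly b, e1, e2]
        omega
      · intro v hv
        obtain ⟨hva, hvb, hvc, hvd⟩ := not_corner h1 h2 hcc hdd hv
        have e1 : ab v = 0 := by
          rw [hab, Finsupp.add_apply, Finsupp.single_apply, Finsupp.single_apply,
            if_neg (fun h => hva h.symm), if_neg (fun h => hvb h.symm)]
          omega
        have e2 : cd v = 0 := by
          rw [hcd, Finsupp.add_apply, Finsupp.single_apply, Finsupp.single_apply,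
            if_neg (fun h => hvc h.symm), if_neg (fun h => hvd h.symm)]
          omega
        rw [happly v, e1, e2]
        omega
    obtain ⟨n, hn1, hn2, hn3, hn4⟩ := ih n₁ hmlt
    refine ⟨n, hn1, fun i => (hn2 i).trans (hrowEq i), fun j => (hn3 j).trans (hcolEq j),
      Or.inr ?_⟩
    rcases hn4 with rfl | h
    · exact hmlt
    · exact monLt_trans h hmlt

end Reduce


/-! #### The inner 2-minors as polynomials -/

noncomputable def diag (a b : T P) : T P →₀ ℕ := Finsupp.single a 1 + Finsupp.single b 1

lemma diag_apply (a b v : T P) :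
    diag a b v = (if a = v then 1 else 0) + (if b = v then 1 else 0) := by
  rw [diag, Finsupp.add_apply, Finsupp.single_apply, Finsupp.single_apply]

lemma wt_diag {a b : T P} : wt (diag a b) = 2 := by
  rw [diag, wt_add, wt_single, wt_single]

lemma rowC_diag (a b : T P) (i : ℕ) :
    rowC (diag a b) i = (if a.1.1 = i then 1 else 0) + (if b.1.1 = i then 1 else 0) := by
  rw [diag, rowC_add, rowC_single, rowC_single]

lemma colC_diag (a b : T P) (j : ℕ) :
    colC (diag a b) j = (if a.1.2 = j then 1 else 0) + (if b.1.2 = j then 1 else 0) := by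
  rw [diag, colC_add, colC_single, colC_single]

lemma wt_eq_zero {m : T P →₀ ℕ} (h : wt m = 0) : m = 0 := by
  ext v
  have := le_wt m v
  simp only [Finsupp.coe_zero, Pi.zero_apply]
  omega

lemma lead_unique {K : Type*} [Field K] {f : MvPolynomial {v : ℕ × ℕ // v ∈ verts P} K}
    {m₁ m₂ : {v : ℕ × ℕ // v ∈ verts P} →₀ ℕ}
    (hA : IsLeadMon f m₁) (hB : IsLeadMon f m₂) : m₁ = m₂ := by
  by_contra hne
  exact monLt_asymm (hA.2 m₂ hB.1 (Ne.symm hne)) (hB.2 m₁ hA.1 hne)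

lemma diag_eq_cases {u w u' w' : T P} (huw : u ≠ w) (huw' : u' ≠ w')
    (h : diag u w = diag u' w') : (u = u' ∧ w = w') ∨ (u = w' ∧ w = u') := by
  have hval : ∀ v, (if u = v then (1:ℕ) else 0) + (if w = v then 1 else 0) =
      (if u' = v then 1 else 0) + (if w' = v then 1 else 0) := fun v => by
    rw [← diag_apply, ← diag_apply, h]
  by_cases e1 : u = u'
  · by_cases e2 : w = w'
    · exact Or.inl ⟨e1, e2⟩
    · exfalso
      have e3 : ¬ u = w' := fun h' => huw' (by rw [← e1, h'])
      have h2 := hval w'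
      simp [e2, e3, huw'] at h2
  · have e4 : w = u' := by
      by_contra e4
      have h1 := hval u'
      simp [e1, e4, Ne.symm huw'] at h1
    have e2 : ¬ w = w' := fun h' => huw' (by rw [← e4, h'])
    have e3 : u = w' := by
      by_contra e3
      have h2 := hval w'
      simp [e2, e3, huw'] at h2
    exact Or.inr ⟨e3, e4⟩

section MinorLemmas

open MvPolynomial

variable {K : Type*} [Field K]

lemma X_mul_X (u w : T P) :
    (X u * X w : MvPolynomial {v : ℕ × ℕ // v ∈ verts P} K) = monomial (diag u w) (1:K) := by
  have h1 : (X u : MvPolynomial {v : ℕ × ℕ // v ∈ verts P} K)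
      = monomial (Finsupp.single u 1) 1 := rfl
  have h2 : (X w : MvPolynomial {v : ℕ × ℕ // v ∈ verts P} K)
      = monomial (Finsupp.single w 1) 1 := rfl
  rw [h1, h2, monomial_mul, one_mul, diag]

variable {a b c d : T P}

lemma minor_poly : (X a * X b - X c * X d : MvPolynomial {v : ℕ × ℕ // v ∈ verts P} K) =
    monomial (diag a b) 1 - monomial (diag c d) 1 := by
  rw [X_mul_X, X_mul_X]

lemma minor_coeff (m : T P →₀ ℕ) :
    coeff m (X a * X b - X c * X d : MvPolynomial {v : ℕ × ℕ // v ∈ verts P} K) =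
    (if diag a b = m then (1:K) else 0) - (if diag c d = m then 1 else 0) := by
  rw [minor_poly, coeff_sub, coeff_monomial, coeff_monomial]

lemma minor_support (m : T P →₀ ℕ)
    (hm : m ∈ (X a * X b - X c * X d : MvPolynomial {v : ℕ × ℕ // v ∈ verts P} K).support) :
    m = diag a b ∨ m = diag c d := by
  by_contra hcon
  push_neg at hcon
  rw [MvPolynomial.mem_support_iff, minor_coeff] at hm
  rw [if_neg (fun h => hcon.1 h.symm), if_neg (fun h => hcon.2 h.symm)] at hm
  simp at hm

variable (h1 : a.1.1 < b.1.1) (h2 : a.1.2 < b.1.2)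
  (hc : c.1 = (b.1.1, a.1.2)) (hd : d.1 = (a.1.1, b.1.2))

include h1 h2 hc hd in
lemma corner_distinct : a ≠ b ∧ c ≠ b ∧ d ≠ b ∧ a ≠ c ∧ a ≠ d ∧ c ≠ d := by
  have hc1 : c.1.1 = b.1.1 := by rw [hc]
  have hc2 : c.1.2 = a.1.2 := by rw [hc]
  have hd1 : d.1.1 = a.1.1 := by rw [hd]
  have hd2 : d.1.2 = b.1.2 := by rw [hd]
  have hfst : ∀ u w : T P, u.1.1 ≠ w.1.1 → u ≠ w := fun u w h he => h (by rw [he])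
  have hsnd : ∀ u w : T P, u.1.2 ≠ w.1.2 → u ≠ w := fun u w h he => h (by rw [he])
  exact ⟨hfst _ _ (by omega), hsnd _ _ (by omega), hfst _ _ (by omega),
    hfst _ _ (by omega), hsnd _ _ (by omega), hfst _ _ (by omega)⟩

include h1 h2 hc hd in
lemma diag_ab_ne_cd : diag a b ≠ diag c d := by
  obtain ⟨hab, hcb, hdb, -, -, -⟩ := corner_distinct h1 h2 hc hd
  intro h
  have h' := DFunLike.congr_fun h b
  rw [diag_apply, diag_apply, if_neg hab, if_pos rfl, if_neg hcb, if_neg hdb] at h'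
  omega

include h1 h2 hc hd in
lemma minor_lead_mem : diag a b ∈
    (X a * X b - X c * X d : MvPolynomial {v : ℕ × ℕ // v ∈ verts P} K).support := by
  rw [MvPolynomial.mem_support_iff, minor_coeff, if_pos rfl,
    if_neg (Ne.symm (diag_ab_ne_cd h1 h2 hc hd))]
  simp

include h1 h2 hc hd in
lemma minor_monLt : monLt (diag c d) (diag a b) := by
  obtain ⟨hab, hcb, hdb, -, -, -⟩ := corner_distinct h1 h2 hc hd
  refine ⟨b, ?_, ?_⟩
  · rw [diag_apply, diag_apply, if_neg hab, if_pos rfl, if_neg hcb, if_neg hdb]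
    omega
  · intro v hv
    obtain ⟨hva, hvb, hvc, hvd⟩ := not_corner h1 h2 hc hd hv
    rw [diag_apply, diag_apply, if_neg (fun h => hvc h.symm), if_neg (fun h => hvd h.symm),
      if_neg (fun h => hva h.symm), if_neg (fun h => hvb h.symm)]

include h1 h2 hc hd in
lemma minor_lead :
    IsLeadMon (X a * X b - X c * X d : MvPolynomial {v : ℕ × ℕ // v ∈ verts P} K)
      (diag a b) := by
  refine ⟨minor_lead_mem h1 h2 hc hd, fun m' hm' hne => ?_⟩
  rcases minor_support m' hm' with rfl | rfl
  · exact absurd rfl hne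
  · exact minor_monLt h1 h2 hc hd

include h1 h2 hc hd in
lemma minor_coeff_lead :
    coeff (diag a b) (X a * X b - X c * X d : MvPolynomial {v : ℕ × ℕ // v ∈ verts P} K)
      = 1 := by
  rw [minor_coeff, if_pos rfl, if_neg (Ne.symm (diag_ab_ne_cd h1 h2 hc hd))]
  ring

include hc hd in
lemma rowC_diag_swap (i : ℕ) : rowC (diag c d) i = rowC (diag a b) i := by
  have e1 : c.1.1 = b.1.1 := by rw [hc]
  have e2 : d.1.1 = a.1.1 := by rw [hd]
  rw [rowC_diag, rowC_diag, e1, e2]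
  omega

include hc hd in
lemma colC_diag_swap (j : ℕ) : colC (diag c d) j = colC (diag a b) j := by
  have e1 : c.1.2 = a.1.2 := by rw [hc]
  have e2 : d.1.2 = b.1.2 := by rw [hd]
  rw [colC_diag, colC_diag, e1, e2]

include h1 h2 hc hd in
lemma minor_totalDegree :
    (X a * X b - X c * X d : MvPolynomial {v : ℕ × ℕ // v ∈ verts P} K).totalDegree = 2 := by
  apply le_antisymm
  · rw [MvPolynomial.totalDegree]
    apply Finset.sup_le
    intro m hm
    rcases minor_support m hm with rfl | rfl
    · exact le_of_eq wt_diag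
    · exact le_of_eq wt_diag
  · have hmem := minor_lead_mem (K := K) h1 h2 hc hd
    have hle := Finset.le_sup (f := fun s : T P →₀ ℕ => s.sum fun _ e => e) hmem
    rw [MvPolynomial.totalDegree]
    calc (2:ℕ) = wt (diag a b) := wt_diag.symm
    _ ≤ _ := hle

end MinorLemmas

end StackAux
section MainProof

open StackAux MvPolynomial

/-- For a stack polyomino `P`, the inner 2-minors of `P` form a reduced
quadratic Gröbner basis of `I_P` with respect to `<¹_lex`. -/
theorem stack_reduced_groebner (K : Type*) [Field K]
    (P : Finset Cell) (hs : StackPolyomino P) :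
    IsReducedGroebnerBasis (innerMinors K P) (innerIdeal K P) ∧
      ∀ g ∈ innerMinors K P, MvPolynomial.totalDegree g = 2 := by
  classical
  obtain ⟨hPne, ⟨hrow, hcol⟩, j₀, hb1, hb2⟩ := hs
  choose σ hσ1 hσ2 hσ3 hσ4 using reduce_exists hrow hcol hb1 hb2
  have hσcongr : ∀ m₁ m₂ : T P →₀ ℕ, (∀ i, rowC m₁ i = rowC m₂ i) →
      (∀ j, colC m₁ j = colC m₂ j) → σ m₁ = σ m₂ := by
    intro m₁ m₂ hr hcq
    exact std_unique hrow hcol hb1 hb2 (wt (σ m₁)) _ _ le_rfl (hσ1 m₁) (hσ1 m₂)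
      (fun i => (hσ2 m₁ i).trans ((hr i).trans (hσ2 m₂ i).symm))
      (fun j => (hσ3 m₁ j).trans ((hcq j).trans (hσ3 m₂ j).symm))
  have hσid : ∀ m : T P →₀ ℕ, Std m → σ m = m := by
    intro m hm
    exact std_unique hrow hcol hb1 hb2 (wt (σ m)) _ _ le_rfl (hσ1 m) hm (hσ2 m) (hσ3 m)
  -- the submodule spanned by monomial multiples of the inner minors
  set MS : Set (MvPolynomial {v : ℕ × ℕ // v ∈ verts P} K) :=
    {p | ∃ (u : T P →₀ ℕ) (g : MvPolynomial {v : ℕ × ℕ // v ∈ verts P} K),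
      g ∈ innerMinors K P ∧ p = (monomial u (1 : K)) * g} with hMS
  set W := Submodule.span K MS with hW
  have hmono : ∀ (u : T P →₀ ℕ) (cc : K) x, x ∈ W → (monomial u cc) * x ∈ W := by
    intro u cc x hx
    refine Submodule.span_induction (p := fun y _ => (monomial u cc) * y ∈ W)
      ?_ ?_ ?_ ?_ hx
    · rintro p ⟨u', g, hg, rfl⟩
      have he : (monomial u cc) * (monomial u' (1 : K) * g)
          = cc • ((monomial (u + u') (1 : K)) * g) := by
        rw [← mul_assoc, monomial_mul, mul_one, ← smul_mul_assoc, smul_monomial,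
          smul_eq_mul, mul_one]
      rw [he]
      exact Submodule.smul_mem _ _ (Submodule.subset_span ⟨u + u', g, hg, rfl⟩)
    · show (monomial u cc) * (0 : MvPolynomial {v : ℕ × ℕ // v ∈ verts P} K) ∈ W
      rw [mul_zero]; exact Submodule.zero_mem _
    · intro x y hx hy hx' hy'
      show (monomial u cc) * (x + y) ∈ W
      rw [mul_add]; exact Submodule.add_mem _ hx' hy'
    · intro r x hx hx'
      show (monomial u cc) * (r • x) ∈ W
      rw [mul_smul_comm]; exact Submodule.smul_mem _ _ hx'
  have hmul : ∀ (p x : MvPolynomial {v : ℕ × ℕ // v ∈ verts P} K), x ∈ W → p * x ∈ W := by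
    intro p
    refine MvPolynomial.induction_on' p (fun u a x hx => hmono u a x hx)
      (fun p q hp hq x hx => by rw [add_mul]; exact Submodule.add_mem _ (hp x hx) (hq x hx))
  have hIW : ∀ h ∈ innerIdeal K P, h ∈ W := by
    intro h hh
    have hJ : innerIdeal K P ≤
        ({ carrier := (W : Set (MvPolynomial {v : ℕ × ℕ // v ∈ verts P} K)),
           add_mem' := fun hx hy => W.add_mem hx hy,
           zero_mem' := W.zero_mem,
           smul_mem' := fun cN {x} hx => by
             simpa [smul_eq_mul] using hmul cN x hx } :
          Ideal (MvPolynomial {v : ℕ × ℕ // v ∈ verts P} K)) := by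
      rw [innerIdeal]
      refine Ideal.span_le.mpr ?_
      intro g hg
      exact Submodule.subset_span ⟨0, g, hg, by simp⟩
    exact hJ hh
  have hkill : ∀ x ∈ W, Finsupp.mapDomain σ (AddMonoidAlgebra.coeff x) = (0 : (T P →₀ ℕ) →₀ K) := by
    intro x hx
    refine Submodule.span_induction (p := fun y _ => Finsupp.mapDomain σ (AddMonoidAlgebra.coeff y) = 0)
      ?_ ?_ ?_ ?_ hx
    · rintro p ⟨u, g, hg, rfl⟩
      obtain ⟨a, b, c, d, hI, hcEq, hdEq, rfl⟩ := hg
      show Finsupp.mapDomain σ (AddMonoidAlgebra.coeff ((monomial u (1 : K)) * (X a * X b - X c * X d))) = 0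
      have hpoly : (monomial u (1 : K)) * (X a * X b - X c * X d) =
          monomial (u + diag a b) (1 : K) - monomial (u + diag c d) 1 := by
        rw [minor_poly, mul_sub, monomial_mul, monomial_mul, mul_one]
      rw [hpoly]
      have hsub := map_sub (Finsupp.lmapDomain K K σ)
        (AddMonoidAlgebra.coeff (monomial (u + diag a b) (1 : K))) (AddMonoidAlgebra.coeff (monomial (u + diag c d) (1 : K)))
      have hmapmono : ∀ (s : T P →₀ ℕ),
          Finsupp.mapDomain σ (AddMonoidAlgebra.coeff (monomial s (1 : K))) = Finsupp.single (σ s) (1 : K) := by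
        intro s
        rw [← MvPolynomial.single_eq_monomial]
        exact Finsupp.mapDomain_single
      have hcongr : σ (u + diag a b) = σ (u + diag c d) := by
        refine hσcongr _ _ (fun i => ?_) (fun j => ?_)
        · rw [rowC_add, rowC_add, rowC_diag_swap hcEq hdEq]
        · rw [colC_add, colC_add, colC_diag_swap hcEq hdEq]
      exact hsub.trans (by
        show Finsupp.mapDomain σ (AddMonoidAlgebra.coeff (monomial (u + diag a b) (1 : K)))
            - Finsupp.mapDomain σ (AddMonoidAlgebra.coeff (monomial (u + diag c d) (1 : K))) = 0
        rw [hmapmono, hmapmono, hcongr, sub_self])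
    · show Finsupp.mapDomain σ (AddMonoidAlgebra.coeff (0 : MvPolynomial {v : ℕ × ℕ // v ∈ verts P} K)) = 0
      exact Finsupp.mapDomain_zero
    · intro x y hx hy hx' hy'
      show Finsupp.mapDomain σ (AddMonoidAlgebra.coeff (x + y)) = 0
      have hadd := map_add (Finsupp.lmapDomain K K σ) (AddMonoidAlgebra.coeff x) (AddMonoidAlgebra.coeff y)
      exact hadd.trans (by
        show Finsupp.mapDomain σ (AddMonoidAlgebra.coeff x) + Finsupp.mapDomain σ (AddMonoidAlgebra.coeff y) = 0
        rw [hx', hy', add_zero])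
    · intro r x hx hx'
      show Finsupp.mapDomain σ (AddMonoidAlgebra.coeff (r • x)) = 0
      have hsm := map_smul (Finsupp.lmapDomain K K σ) r (AddMonoidAlgebra.coeff x)
      exact hsm.trans (by
        show r • Finsupp.mapDomain σ (AddMonoidAlgebra.coeff x) = 0
        rw [hx', smul_zero])
  -- the Gröbner division condition
  have hGB2 : ∀ f ∈ innerIdeal K P, f ≠ 0 → ∃ g ∈ innerMinors K P,
      ∃ mg mf, IsLeadMon g mg ∧ IsLeadMon f mf ∧ ∃ d0, mf = mg + d0 := by
    intro f hf hf0
    have hsupp : f.support.Nonempty := by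
      rw [Finset.nonempty_iff_ne_empty]
      intro h
      exact hf0 (MvPolynomial.support_eq_empty.mp h)
    obtain ⟨mf, hmf_mem, hmf_max⟩ := exists_monLt_max f.support hsupp
    have hlead : IsLeadMon f mf := ⟨hmf_mem, hmf_max⟩
    by_cases hstd : Std mf
    · exfalso
      have hzero := hkill f (hIW f hf)
      have hσmf : σ mf = mf := hσid mf hstd
      have hmd : Finsupp.mapDomain σ (AddMonoidAlgebra.coeff f)
          = Finsupp.sum (AddMonoidAlgebra.coeff f) fun a bb => Finsupp.single (σ a) bb := rfl
      have hcoeff : (Finsupp.mapDomain σ (AddMonoidAlgebra.coeff f)) mf = MvPolynomial.coeff mf f := by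
        rw [hmd, Finsupp.sum_apply]
        have hFs : Finsupp.sum (AddMonoidAlgebra.coeff f) (fun a bb => (Finsupp.single (σ a) bb) mf)
            = ∑ a ∈ f.support, (Finsupp.single (σ a) (MvPolynomial.coeff a f)) mf := rfl
        rw [hFs]
        have hside : ∀ m₂ ∈ f.support, m₂ ≠ mf →
            (Finsupp.single (σ m₂) (MvPolynomial.coeff m₂ f)) mf = 0 := by
          intro m₂ hm₂ hne
          have hne' : σ m₂ ≠ mf := by
            rcases hσ4 m₂ with he | hlt
            · rw [he]; exact hne
            · intro heq
              have hmm : monLt m₂ mf := hmf_max m₂ hm₂ hne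
              have h2 : monLt (σ m₂) mf := monLt_trans hlt hmm
              rw [heq] at h2
              exact monLt_irrefl mf h2
          exact Finsupp.single_eq_of_ne (Ne.symm hne')
        rw [Finset.sum_eq_single_of_mem mf hmf_mem hside, hσmf, Finsupp.single_eq_same]
      rw [hzero] at hcoeff
      have hne0 : MvPolynomial.coeff mf f ≠ 0 := MvPolynomial.mem_support_iff.mp hmf_mem
      simp at hcoeff
      exact hne0 hcoeff.symm
    · obtain ⟨a, b, hI, hma, hmb⟩ := not_not.mp hstd
      have h1 : a.1.1 < b.1.1 := hI.1
      have h2 : a.1.2 < b.1.2 := hI.2.1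
      refine ⟨X a * X b - X (⟨(b.1.1, a.1.2), inner_vert_c hI⟩ : T P)
          * X (⟨(a.1.1, b.1.2), inner_vert_d hI⟩ : T P),
        ⟨a, b, ⟨(b.1.1, a.1.2), inner_vert_c hI⟩, ⟨(a.1.1, b.1.2), inner_vert_d hI⟩,
          hI, rfl, rfl, rfl⟩,
        diag a b, mf, minor_lead h1 h2 rfl rfl, hlead, mf - diag a b, ?_⟩
      have hne_ab : a ≠ b := fun h => by rw [h] at h1; omega
      have hle : diag a b ≤ mf := pair_le hne_ab hma hmb
      exact (add_tsub_cancel_of_le hle).symm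
  have hG1 : ∀ g ∈ innerMinors K P, g ∈ innerIdeal K P := fun g hg => Ideal.subset_span hg
  have hmonic : ∀ g ∈ innerMinors K P, ∃ m, IsLeadMon g m ∧ g.coeff m = 1 := by
    intro g hg
    obtain ⟨a, b, c, d, hI, hcEq, hdEq, rfl⟩ := hg
    exact ⟨diag a b, minor_lead hI.1 hI.2.1 hcEq hdEq,
      minor_coeff_lead hI.1 hI.2.1 hcEq hdEq⟩
  have hred : ∀ g ∈ innerMinors K P, ∀ g' ∈ innerMinors K P, g' ≠ g →
      ∀ m ∈ g.support, ∀ m', IsLeadMon g' m' → ¬ ∃ d0, m = m' + d0 := by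
    intro g hg g' hg' hne m hm m' hm'
    obtain ⟨a, b, c, d, hI, hcEq, hdEq, rfl⟩ := hg
    obtain ⟨a', b', c', d', hI', hcEq', hdEq', rfl⟩ := hg'
    rintro ⟨d0, hd0⟩
    have hm'' : m' = diag a' b' := lead_unique hm' (minor_lead hI'.1 hI'.2.1 hcEq' hdEq')
    subst hm''
    have hmw : wt m = 2 := by
      rcases minor_support m hm with rfl | rfl
      · exact wt_diag
      · exact wt_diag
    have hw2 : wt m = wt (diag a' b') + wt d0 := by rw [hd0, wt_add]
    have hwd : wt (diag a' b') = 2 := wt_diag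
    have hd00 : d0 = 0 := wt_eq_zero (by omega)
    subst hd00
    rw [add_zero] at hd0
    obtain ⟨hab, hcb, hdb, hac, had, hcd⟩ := corner_distinct hI.1 hI.2.1 hcEq hdEq
    obtain ⟨hab', -, -, -, -, hcd'⟩ := corner_distinct hI'.1 hI'.2.1 hcEq' hdEq'
    have e1 : a.1.1 < b.1.1 := hI.1
    have e2 : a'.1.1 < b'.1.1 := hI'.1
    have e3 : a.1.2 < b.1.2 := hI.2.1
    have e4 : a'.1.2 < b'.1.2 := hI'.2.1
    rcases minor_support m hm with rfl | rfl
    · rcases diag_eq_cases hab hab' hd0 with ⟨he1, he2⟩ | ⟨he1, he2⟩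
      · apply hne
        subst he1
        subst he2
        have hcc : c' = c := Subtype.ext (by rw [hcEq', hcEq])
        have hdd : d' = d := Subtype.ext (by rw [hdEq', hdEq])
        rw [hcc, hdd]
      · have f1 : a.1.1 = b'.1.1 := by rw [he1]
        have f2 : b.1.1 = a'.1.1 := by rw [he2]
        omega
    · rcases diag_eq_cases hcd hab' hd0 with ⟨he1, he2⟩ | ⟨he1, he2⟩
      · have f1 : c.1.1 = a'.1.1 := by rw [he1]
        have f2 : d.1.1 = b'.1.1 := by rw [he2]
        have f3 : c.1.1 = b.1.1 := by rw [hcEq]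
        have f4 : d.1.1 = a.1.1 := by rw [hdEq]
        omega
      · have f1 : c.1.2 = b'.1.2 := by rw [he1]
        have f2 : d.1.2 = a'.1.2 := by rw [he2]
        have f3 : c.1.2 = a.1.2 := by rw [hcEq]
        have f4 : d.1.2 = b.1.2 := by rw [hdEq]
        omega
  have hdeg : ∀ g ∈ innerMinors K P, MvPolynomial.totalDegree g = 2 := by
    intro g hg
    obtain ⟨a, b, c, d, hI, hcEq, hdEq, rfl⟩ := hg
    exact minor_totalDegree hI.1 hI.2.1 hcEq hdEq
  exact ⟨⟨⟨hG1, hGB2⟩, hmonic, hred⟩, hdeg⟩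

end MainProof
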